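/- Let 0 < a < b < 1 and let X = [0,1]^3 \ (a,b)^3 be the cube minus an open cube. Then X contains a total directed path, and any two total directed paths in X are dihomotopic in X; i.e., there is exactly one dihomotopy class of total directed paths in X. -/

import Mathlib

open Set

/-- A directed path in `Y ⊆ ℝⁿ`: a continuous map from the unit interval, all of whose
coordinate functions are monotone nondecreasing, with values in `Y`. -/
def IsDiPath (n : ℕ) (Y : Set (Fin n → ℝ)) (p : unitInterval → Fin n → ℝ) : Prop :=
  Continuous p ∧ (∀ t, p t ∈ Y) ∧ ∀ j : Fin n, Monotone fun t => p t j

/-- A total directed path goes from `(0,…,0)` to `(1,…,1)`. -/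
def IsTotalDiPath (n : ℕ) (Y : Set (Fin n → ℝ)) (p : unitInterval → Fin n → ℝ) : Prop :=
  IsDiPath n Y p ∧ p 0 = (fun _ => (0:ℝ)) ∧ p 1 = (fun _ => (1:ℝ))

/-- The unit cube `[0,1]^n`. -/
def cube (n : ℕ) : Set (Fin n → ℝ) := {z | ∀ j, z j ∈ Icc (0:ℝ) 1}

/-- Elementary dihomotopy of directed paths with fixed common endpoints in `Y`. -/
def ElemDihomotopic (n : ℕ) (Y : Set (Fin n → ℝ)) (p q : unitInterval → Fin n → ℝ) : Prop :=
  IsDiPath n Y p ∧ IsDiPath n Y q ∧ p 0 = q 0 ∧ p 1 = q 1 ∧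
  ∃ H : unitInterval → unitInterval → Fin n → ℝ,
    Continuous (fun tu : unitInterval × unitInterval => H tu.1 tu.2) ∧
    H 0 = p ∧ H 1 = q ∧ (∀ t, IsDiPath n Y (H t)) ∧
    ∀ (u : unitInterval) (j : Fin n), Monotone fun t => H t u j

/-- Dihomotopy: equivalence relation generated by elementary dihomotopy. -/
def Dihomotopic (n : ℕ) (Y : Set (Fin n → ℝ)) :
    (unitInterval → Fin n → ℝ) → (unitInterval → Fin n → ℝ) → Prop :=
  Relation.EqvGen (ElemDihomotopic n Y)

noncomputable def mm (u : unitInterval) : ℝ := min (2*(u:ℝ)) 1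
noncomputable def ll (u : unitInterval) : ℝ := max (2*(u:ℝ) - 1) 0

lemma mm_mono : Monotone mm := fun u v h => min_le_min (by simpa using (by exact_mod_cast h : (u:ℝ) ≤ v)) le_rfl

lemma ll_mono : Monotone ll := fun u v h => max_le_max (by have : (u:ℝ) ≤ v := h; linarith) le_rfl

lemma mm_cont : Continuous mm := (continuous_const.mul continuous_subtype_val).min continuous_const
lemma ll_cont : Continuous ll := ((continuous_const.mul continuous_subtype_val).sub continuous_const).max continuous_const

lemma mm_zero : mm 0 = 0 := by simp [mm]
lemma mm_one : mm 1 = 1 := by simp [mm]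
lemma ll_zero : ll 0 = 0 := by norm_num [ll]
lemma ll_one : ll 1 = 1 := by norm_num [ll]

lemma mm_mem (u : unitInterval) : mm u ∈ Icc (0:ℝ) 1 :=
  ⟨le_min (by have := u.2.1; linarith) zero_le_one, min_le_right _ _⟩
lemma ll_mem (u : unitInterval) : ll u ∈ Icc (0:ℝ) 1 :=
  ⟨le_max_right _ _, max_le (by have := u.2.2; linarith) zero_le_one⟩

lemma ll_le_mm (u : unitInterval) : ll u ≤ mm u :=
  max_le (le_min (by linarith) (by have := u.2.2; linarith)) (mm_mem u).1

/-- if `mm u < b < 1` then `ll u = 0`. -/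
lemma ll_eq_zero {b : ℝ} (hb : b < 1) (u : unitInterval) (h : mm u < b) : ll u = 0 := by
  have h2 : 2*(u:ℝ) < b := by
    rcases min_cases (2*(u:ℝ)) 1 with ⟨he, _⟩ | ⟨he, hle⟩
    · rw [mm, he] at h; exact h
    · rw [mm, he] at h; linarith
  exact max_eq_right (by linarith)

/-- if `0 < a < ll v` then `mm v = 1`. -/
lemma mm_eq_one {a : ℝ} (ha : 0 < a) (v : unitInterval) (h : a < ll v) : mm v = 1 := by
  have h2 : a < 2*(v:ℝ) - 1 := by
    rcases max_cases (2*(v:ℝ) - 1) 0 with ⟨he, _⟩ | ⟨he, _⟩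
    · rw [ll, he] at h; exact h
    · rw [ll, he] at h; exact absurd h (not_lt.2 ha.le)
  exact min_eq_right (by linarith)

noncomputable def hpath (i : Fin 3) : unitInterval → Fin 3 → ℝ :=
  fun u j => if j = i then mm u else ll u
noncomputable def cpath (i : Fin 3) : unitInterval → Fin 3 → ℝ :=
  fun u j => if j = i then ll u else mm u


-- new content:
lemma exists_ne_fin3 (i : Fin 3) : ∃ j : Fin 3, j ≠ i := by
  fin_cases i
  · exact ⟨1, by decide⟩
  · exact ⟨0, by decide⟩
  · exact ⟨0, by decide⟩

lemma hpath_total (a b : ℝ) (ha : 0 < a) (hb : b < 1) (X : Set (Fin 3 → ℝ))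
    (hX : X = cube 3 \ {z | ∀ j, z j ∈ Ioo a b}) (i : Fin 3) :
    IsTotalDiPath 3 X (hpath i) := by
  refine ⟨⟨?_, ?_, ?_⟩, ?_, ?_⟩
  · exact continuous_pi fun j => by by_cases h : j = i <;> simp [hpath, h, mm_cont, ll_cont]
  · intro u
    rw [hX]
    refine ⟨fun j => ?_, ?_⟩
    · by_cases h : j = i
      · simpa [hpath, h] using mm_mem u
      · simpa [hpath, h] using ll_mem u
    intro hall
    obtain ⟨j, hj⟩ := exists_ne_fin3 i
    have h1 : mm u = 1 := mm_eq_one ha u (by simpa [hpath, hj] using (hall j).1)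
    have := (hall i).2
    simp [hpath, h1] at this
    linarith
  · intro j; by_cases h : j = i <;> simp [hpath, h, mm_mono, ll_mono]
  · funext j; by_cases h : j = i <;> simp [hpath, h, mm_zero, ll_zero]
  · funext j; by_cases h : j = i <;> simp [hpath, h, mm_one, ll_one]

lemma cpath_total (a b : ℝ) (ha : 0 < a) (hb : b < 1) (X : Set (Fin 3 → ℝ))
    (hX : X = cube 3 \ {z | ∀ j, z j ∈ Ioo a b}) (i : Fin 3) :
    IsTotalDiPath 3 X (cpath i) := by
  refine ⟨⟨?_, ?_, ?_⟩, ?_, ?_⟩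
  · exact continuous_pi fun j => by by_cases h : j = i <;> simp [cpath, h, mm_cont, ll_cont]
  · intro u
    rw [hX]
    refine ⟨fun j => ?_, ?_⟩
    · by_cases h : j = i
      · simpa [cpath, h] using ll_mem u
      · simpa [cpath, h] using mm_mem u
    intro hall
    obtain ⟨j, hj⟩ := exists_ne_fin3 i
    have h1 : mm u = 1 := mm_eq_one ha u (by simpa [cpath] using (hall i).1)
    have := (hall j).2
    simp [cpath, hj, h1] at this
    linarith
  · intro j; by_cases h : j = i <;> simp [cpath, h, mm_mono, ll_mono]
  · funext j; by_cases h : j = i <;> simp [cpath, h, mm_zero, ll_zero]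
  · funext j; by_cases h : j = i <;> simp [cpath, h, mm_one, ll_one]


-- helper: projIcc facts
noncomputable def pre (x : ℝ) : unitInterval := Set.projIcc (0:ℝ) 1 zero_le_one x

lemma monoUR (t : unitInterval) : Monotone fun u : unitInterval => (u:ℝ)+(t:ℝ) :=
  fun u v h => by dsimp only; exact add_le_add_left (show (u:ℝ) ≤ v from h) _
lemma monoUL (u : unitInterval) : Monotone fun t : unitInterval => (u:ℝ)+(t:ℝ) :=
  fun s t h => by dsimp only; exact add_le_add_right (show (s:ℝ) ≤ t from h) _
lemma monoUR' (t : unitInterval) : Monotone fun u : unitInterval => (u:ℝ)+(t:ℝ)-1 :=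
  fun u v h => by dsimp only; have : (u:ℝ) ≤ v := h; linarith
lemma monoUL' (u : unitInterval) : Monotone fun t : unitInterval => (u:ℝ)+(t:ℝ)-1 :=
  fun s t h => by dsimp only; have : (s:ℝ) ≤ t := h; linarith

lemma pre_coe (u : unitInterval) : pre (u:ℝ) = u := by
  rw [pre, Set.projIcc_of_mem _ u.2]

lemma pre_mono : Monotone pre := Set.monotone_projIcc zero_le_one
lemma pre_cont : Continuous pre := by unfold pre; exact continuous_projIcc

lemma coe_mono : Monotone (fun u : unitInterval => (u:ℝ)) := fun _ _ h => h

lemma elem_of_le (X : Set (Fin 3 → ℝ)) (g h : unitInterval → Fin 3 → ℝ)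
    (hg : IsTotalDiPath 3 X g) (hh : IsTotalDiPath 3 X h)
    (hub : ∀ u j, g u j ≤ 1)
    (hle : ∀ u j, h u j ≤ g u j)
    (hmem : ∀ u v : unitInterval, u ≤ v → (fun j => min (g u j) (h v j)) ∈ X) :
    ElemDihomotopic 3 X h g := by
  obtain ⟨⟨hgc, hgX, hgm⟩, hg0, hg1⟩ := hg
  obtain ⟨⟨hhc, hhX, hhm⟩, hh0, hh1⟩ := hh
  refine ⟨⟨hhc, hhX, hhm⟩, ⟨hgc, hgX, hgm⟩, hh0.trans hg0.symm, hh1.trans hg1.symm, ?_⟩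
  refine ⟨fun t u j => min (g u j) (h (pre ((u:ℝ)+(t:ℝ))) j), ?_, ?_, ?_, ?_, ?_⟩
  · refine continuous_pi fun j => Continuous.min ?_ ?_
    · exact ((continuous_apply j).comp hgc).comp continuous_snd
    · exact ((continuous_apply j).comp hhc).comp (pre_cont.comp
        ((continuous_subtype_val.comp continuous_snd).add (continuous_subtype_val.comp continuous_fst)))
  · funext u j
    have e : pre ((u:ℝ)+((0:unitInterval):ℝ)) = u := by
      rw [show ((0:unitInterval):ℝ) = 0 from rfl, add_zero, pre_coe]
    show min (g u j) (h (pre ((u:ℝ)+((0:unitInterval):ℝ))) j) = h u j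
    rw [e]
    exact min_eq_right (hle u j)
  · funext u j
    have e : pre ((u:ℝ)+((1:unitInterval):ℝ)) = 1 := by
      rw [pre, Set.projIcc_of_right_le _
        (by linarith [u.2.1, show ((1:unitInterval):ℝ) = 1 from rfl])]
      rfl
    show min (g u j) (h (pre ((u:ℝ)+((1:unitInterval):ℝ))) j) = g u j
    rw [e, hh1]
    exact min_eq_left (hub u j)
  · intro t
    refine ⟨?_, ?_, ?_⟩
    · refine continuous_pi fun j => Continuous.min ((continuous_apply j).comp hgc) ?_
      exact ((continuous_apply j).comp hhc).comp (pre_cont.comp (continuous_subtype_val.add continuous_const))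
    · intro u
      exact hmem u (pre ((u:ℝ)+(t:ℝ)))
        (by nth_rewrite 1 [← pre_coe u]; exact pre_mono (by have := t.2.1; linarith))
    · intro j
      exact Monotone.min (hgm j) ((hhm j).comp (pre_mono.comp (monoUR t)))
  · intro u j
    exact Monotone.min monotone_const ((hhm j).comp (pre_mono.comp (monoUL u)))

lemma elem_up (X : Set (Fin 3 → ℝ)) (p h : unitInterval → Fin 3 → ℝ)
    (hp : IsTotalDiPath 3 X p) (hh : IsTotalDiPath 3 X h)
    (hlb : ∀ u j, 0 ≤ p u j)
    (hmem : ∀ u w : unitInterval, w ≤ u → (fun j => max (p u j) (h w j)) ∈ X) :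
    ElemDihomotopic 3 X p (fun u j => max (p u j) (h u j)) := by
  obtain ⟨⟨hpc, hpX, hpm⟩, hp0, hp1⟩ := hp
  obtain ⟨⟨hhc, hhX, hhm⟩, hh0, hh1⟩ := hh
  have hqc : Continuous (fun u j => max (p u j) (h u j) : unitInterval → Fin 3 → ℝ) :=
    continuous_pi fun j => ((continuous_apply j).comp hpc).max ((continuous_apply j).comp hhc)
  have hq : IsDiPath 3 X (fun u j => max (p u j) (h u j)) :=
    ⟨hqc, fun u => hmem u u le_rfl, fun j => Monotone.max (hpm j) (hhm j)⟩
  refine ⟨⟨hpc, hpX, hpm⟩, hq, ?_, ?_, ?_⟩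
  · funext j
    show p 0 j = max (p 0 j) (h 0 j)
    rw [hp0, hh0]
    simp
  · funext j
    show p 1 j = max (p 1 j) (h 1 j)
    rw [hp1, hh1]
    simp
  refine ⟨fun t u j => max (p u j) (h (pre ((u:ℝ)+(t:ℝ)-1)) j), ?_, ?_, ?_, ?_, ?_⟩
  · refine continuous_pi fun j => Continuous.max ?_ ?_
    · exact ((continuous_apply j).comp hpc).comp continuous_snd
    · exact ((continuous_apply j).comp hhc).comp (pre_cont.comp
        (((continuous_subtype_val.comp continuous_snd).add (continuous_subtype_val.comp continuous_fst)).sub continuous_const))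
  · funext u j
    have e : pre ((u:ℝ)+((0:unitInterval):ℝ)-1) = 0 := by
      rw [pre, Set.projIcc_of_le_left _
        (by linarith [u.2.2, show ((0:unitInterval):ℝ) = 0 from rfl])]
      rfl
    show max (p u j) (h (pre ((u:ℝ)+((0:unitInterval):ℝ)-1)) j) = p u j
    rw [e, hh0]
    exact max_eq_left (hlb u j)
  · funext u j
    have e : pre ((u:ℝ)+((1:unitInterval):ℝ)-1) = u := by
      rw [show ((1:unitInterval):ℝ) = 1 from rfl, add_sub_cancel_right, pre_coe]
    show max (p u j) (h (pre ((u:ℝ)+((1:unitInterval):ℝ)-1)) j) = max (p u j) (h u j)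
    rw [e]
  · intro t
    refine ⟨?_, ?_, ?_⟩
    · refine continuous_pi fun j => Continuous.max ((continuous_apply j).comp hpc) ?_
      exact ((continuous_apply j).comp hhc).comp (pre_cont.comp ((continuous_subtype_val.add continuous_const).sub continuous_const))
    · intro u
      refine hmem u (pre ((u:ℝ)+(t:ℝ)-1)) ?_
      nth_rewrite 2 [← pre_coe u]
      exact pre_mono (by have := t.2.2; linarith)
    · intro j
      exact Monotone.max (hpm j) ((hhm j).comp (pre_mono.comp (monoUR' t)))
  · intro u j
    exact Monotone.max monotone_const ((hhm j).comp (pre_mono.comp (monoUL' u)))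


section geom
variable {a b : ℝ} {X : Set (Fin 3 → ℝ)}

lemma mem_X_iff (hX : X = cube 3 \ {z | ∀ j, z j ∈ Ioo a b}) (z : Fin 3 → ℝ) :
    z ∈ X ↔ (∀ j, 0 ≤ z j ∧ z j ≤ 1) ∧ ¬(∀ j, a < z j ∧ z j < b) := by
  rw [hX]
  constructor
  · rintro ⟨h1, h2⟩
    exact ⟨fun j => h1 j, fun hc => h2 fun j => (hc j)⟩
  · rintro ⟨h1, h2⟩
    exact ⟨fun j => h1 j, fun hc => h2 fun j => hc j⟩

lemma up_mem (ha : 0 < a) (hab : a < b) (hb : b < 1)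
    (hX : X = cube 3 \ {z | ∀ j, z j ∈ Ioo a b})
    (p : unitInterval → Fin 3 → ℝ) (hpX : ∀ u, p u ∈ X) (i : Fin 3)
    (hR : ∀ u, (∀ j, j ≠ i → a < p u j) → b ≤ p u i)
    (u w : unitInterval) (hwu : w ≤ u) :
    (fun j => max (p u j) (hpath i w j)) ∈ X := by
  have hpb := (mem_X_iff hX (p u)).1 (hpX u)
  rw [mem_X_iff hX]
  refine ⟨?_, ?_⟩
  · intro j
    rcases hpb.1 j with ⟨h0, h1⟩
    by_cases h : j = i
    · simp only [hpath, if_pos h]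
      exact ⟨le_max_of_le_left h0, max_le h1 (mm_mem w).2⟩
    · simp only [hpath, if_neg h]
      exact ⟨le_max_of_le_left h0, max_le h1 (ll_mem w).2⟩
  · intro hall
    have hi := hall i
    simp only [hpath, if_pos rfl] at hi
    have hmw : mm w < b := lt_of_le_of_lt (le_max_right _ _) hi.2
    have hpi : p u i < b := lt_of_le_of_lt (le_max_left _ _) hi.2
    have hlw : ll w = 0 := ll_eq_zero hb w hmw
    have : ∀ j, j ≠ i → a < p u j := by
      intro j hj
      have := (hall j).1
      simp only [hpath, if_neg hj, hlw] at this
      calc a < max (p u j) 0 := this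
        _ = p u j := max_eq_left (hpb.1 j).1
    exact absurd (hR u this) (not_le.2 hpi)

lemma down_mem (ha : 0 < a) (hab : a < b) (hb : b < 1)
    (hX : X = cube 3 \ {z | ∀ j, z j ∈ Ioo a b})
    (p : unitInterval → Fin 3 → ℝ) (hpX : ∀ u, p u ∈ X)
    (hpb' : ∀ u j, 0 ≤ p u j ∧ p u j ≤ 1) (i : Fin 3)
    (hR : ∀ u, (∀ j, j ≠ i → a < p u j) → b ≤ p u i)
    (u v : unitInterval) (huv : u ≤ v) :
    (fun j => min (max (p u j) (hpath i u j)) (hpath i v j)) ∈ X := by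
  obtain ⟨j₀, hj₀⟩ : ∃ j : Fin 3, j ≠ i := by
    fin_cases i
    · exact ⟨1, by decide⟩
    · exact ⟨0, by decide⟩
    · exact ⟨0, by decide⟩
  rw [mem_X_iff hX]
  refine ⟨?_, ?_⟩
  · intro j
    rcases hpb' u j with ⟨h0, h1⟩
    by_cases h : j = i
    · simp only [hpath, if_pos h]
      exact ⟨le_min (le_max_of_le_left h0) (mm_mem v).1, min_le_of_right_le (mm_mem v).2⟩
    · simp only [hpath, if_neg h]
      exact ⟨le_min (le_max_of_le_left h0) (ll_mem v).1, min_le_of_right_le (ll_mem v).2⟩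
  · intro hall
    -- from any j ≠ i : a < ll v, hence mm v = 1
    have hav : a < ll v := by
      have := (hall j₀).1
      simp only [hpath, if_neg hj₀] at this
      exact lt_of_lt_of_le this (min_le_right _ _)
    have hmv : mm v = 1 := mm_eq_one ha v hav
    have hi := hall i
    simp only [hpath, if_pos rfl, hmv] at hi
    have hi2 : max (p u i) (mm u) < b := by
      have h1 : max (p u i) (mm u) ≤ 1 := max_le (hpb' u i).2 (mm_mem u).2
      calc max (p u i) (mm u) = min (max (p u i) (mm u)) 1 := (min_eq_left h1).symm
        _ < b := hi.2
    have hpi : p u i < b := lt_of_le_of_lt (le_max_left _ _) hi2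
    have hmu : mm u < b := lt_of_le_of_lt (le_max_right _ _) hi2
    have hlu : ll u = 0 := ll_eq_zero hb u hmu
    have : ∀ j, j ≠ i → a < p u j := by
      intro j hj
      have := (hall j).1
      simp only [hpath, if_neg hj, hlu] at this
      have h2 : max (p u j) 0 = p u j := max_eq_left (hpb' u j).1
      rw [h2] at this
      exact lt_of_lt_of_le this (min_le_left _ _)
    exact absurd (hR u this) (not_le.2 hpi)

lemma bridge_mem (ha : 0 < a) (hab : a < b) (hb : b < 1)
    (hX : X = cube 3 \ {z | ∀ j, z j ∈ Ioo a b})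
    (i k : Fin 3) (hik : i ≠ k)
    (u v : unitInterval) (huv : u ≤ v) :
    (fun j => min (cpath k u j) (hpath i v j)) ∈ X := by
  rw [mem_X_iff hX]
  refine ⟨?_, ?_⟩
  · intro j
    have hc : cpath k u j ∈ Icc (0:ℝ) 1 := by
      by_cases h : j = k
      · rw [show cpath k u j = ll u from if_pos h]; exact ll_mem u
      · rw [show cpath k u j = mm u from if_neg h]; exact mm_mem u
    have hh : hpath i v j ∈ Icc (0:ℝ) 1 := by
      by_cases h : j = i
      · rw [show hpath i v j = mm v from if_pos h]; exact mm_mem v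
      · rw [show hpath i v j = ll v from if_neg h]; exact ll_mem v
    exact ⟨le_min hc.1 hh.1, min_le_of_left_le hc.2⟩
  · intro hall
    have hi := hall i
    have hk := hall k
    rw [show cpath k u i = mm u from if_neg hik, show hpath i v i = mm v from if_pos rfl,
      min_eq_left (mm_mono huv)] at hi
    rw [show cpath k u k = ll u from if_pos rfl, show hpath i v k = ll v from if_neg (Ne.symm hik),
      min_eq_left (ll_mono huv)] at hk
    have hlu : ll u = 0 := ll_eq_zero hb u hi.2
    rw [hlu] at hk
    exact absurd hk.1 (not_lt.2 ha.le)
end geom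


-- new content
section main
variable {a b : ℝ} {X : Set (Fin 3 → ℝ)}

lemma hpath_bd (i : Fin 3) (u : unitInterval) (j : Fin 3) : hpath i u j ∈ Icc (0:ℝ) 1 := by
  by_cases h : j = i
  · rw [show hpath i u j = mm u from if_pos h]; exact mm_mem u
  · rw [show hpath i u j = ll u from if_neg h]; exact ll_mem u

lemma cpath_bd (i : Fin 3) (u : unitInterval) (j : Fin 3) : cpath i u j ∈ Icc (0:ℝ) 1 := by
  by_cases h : j = i
  · rw [show cpath i u j = ll u from if_pos h]; exact ll_mem u
  · rw [show cpath i u j = mm u from if_neg h]; exact mm_mem u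

lemma toCanonical (ha : 0 < a) (hab : a < b) (hb : b < 1)
    (hX : X = cube 3 \ {z | ∀ j, z j ∈ Ioo a b})
    (p : unitInterval → Fin 3 → ℝ) (hp : IsTotalDiPath 3 X p) (i : Fin 3)
    (hR : ∀ u, (∀ j, j ≠ i → a < p u j) → b ≤ p u i) :
    Dihomotopic 3 X p (hpath i) := by
  have hbnd : ∀ u j, 0 ≤ p u j ∧ p u j ≤ 1 :=
    fun u j => ((mem_X_iff hX (p u)).1 (hp.1.2.1 u)).1 j
  have hht := hpath_total a b ha hb X hX i
  have step1 : ElemDihomotopic 3 X p (fun u j => max (p u j) (hpath i u j)) :=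
    elem_up X p (hpath i) hp hht (fun u j => (hbnd u j).1)
      (fun u w hwu => up_mem ha hab hb hX p hp.1.2.1 i hR u w hwu)
  have hqtot : IsTotalDiPath 3 X (fun u j => max (p u j) (hpath i u j)) := by
    refine ⟨step1.2.1, ?_, ?_⟩
    · funext j
      show max (p 0 j) (hpath i 0 j) = 0
      rw [congrFun hp.2.1 j, congrFun hht.2.1 j]
      simp
    · funext j
      show max (p 1 j) (hpath i 1 j) = 1
      rw [congrFun hp.2.2 j, congrFun hht.2.2 j]
      simp
  have step2 : ElemDihomotopic 3 X (hpath i) (fun u j => max (p u j) (hpath i u j)) :=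
    elem_of_le X (fun u j => max (p u j) (hpath i u j)) (hpath i) hqtot hht
      (fun u j => max_le (hbnd u j).2 (hpath_bd i u j).2)
      (fun u j => le_max_right _ _)
      (fun u v huv => down_mem ha hab hb hX p hp.1.2.1 hbnd i hR u v huv)
  exact Relation.EqvGen.trans _ _ _ (Relation.EqvGen.rel _ _ step1)
    (Relation.EqvGen.symm _ _ (Relation.EqvGen.rel _ _ step2))

lemma bridge (ha : 0 < a) (hab : a < b) (hb : b < 1)
    (hX : X = cube 3 \ {z | ∀ j, z j ∈ Ioo a b})
    (i k : Fin 3) (hik : i ≠ k) :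
    ElemDihomotopic 3 X (hpath i) (cpath k) := by
  refine elem_of_le X (cpath k) (hpath i) (cpath_total a b ha hb X hX k)
    (hpath_total a b ha hb X hX i) (fun u j => (cpath_bd k u j).2) ?_
    (fun u v huv => bridge_mem ha hab hb hX i k hik u v huv)
  intro u j
  by_cases h1 : j = i
  · have hjk : j ≠ k := by rw [h1]; exact hik
    rw [show hpath i u j = mm u from if_pos h1,
      show cpath k u j = mm u from if_neg hjk]
  · by_cases h2 : j = k
    · rw [show hpath i u j = ll u from if_neg h1,
        show cpath k u j = ll u from if_pos h2]
    · rw [show hpath i u j = ll u from if_neg h1,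
        show cpath k u j = mm u from if_neg h2]
      exact ll_le_mm u

lemma cover (ha : 0 < a) (hab : a < b) (hb : b < 1)
    (hX : X = cube 3 \ {z | ∀ j, z j ∈ Ioo a b})
    (p : unitInterval → Fin 3 → ℝ) (hp : IsTotalDiPath 3 X p) :
    ∃ i, ∀ u, (∀ j, j ≠ i → a < p u j) → b ≤ p u i := by
  by_contra hc
  push_neg at hc
  choose u hu hub using hc
  set f : Fin 3 → ℝ → ℝ := fun j x => p (pre x) j with hf
  have hfc : ∀ j, Continuous (f j) := fun j => ((continuous_apply j).comp hp.1.1).comp pre_cont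
  have hfm : ∀ j, Monotone (f j) := fun j => (hp.1.2.2 j).comp pre_mono
  have hfu : ∀ (j : Fin 3) (u' : unitInterval), f j (u':ℝ) = p u' j := by
    intro j u'
    show p (pre (u':ℝ)) j = p u' j
    rw [pre_coe]
  have hf0 : ∀ j, f j 0 = 0 := by
    intro j
    have e : pre (0:ℝ) = (0:unitInterval) := pre_coe 0
    show p (pre 0) j = 0
    rw [e, hp.2.1]
  have hf1 : ∀ j, f j 1 = 1 := by
    intro j
    have e : pre (1:ℝ) = (1:unitInterval) := pre_coe 1
    show p (pre 1) j = 1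
    rw [e, hp.2.2]
  set SA : Fin 3 → Set ℝ := fun j => Icc (0:ℝ) 1 ∩ {x | f j x ≤ a} with hSA
  set SB : Fin 3 → Set ℝ := fun j => Icc (0:ℝ) 1 ∩ {x | b ≤ f j x} with hSB
  have hSAc : ∀ j, IsCompact (SA j) := fun j =>
    isCompact_Icc.of_isClosed_subset (isClosed_Icc.inter (isClosed_le (hfc j) continuous_const))
      inter_subset_left
  have hSBc : ∀ j, IsCompact (SB j) := fun j =>
    isCompact_Icc.of_isClosed_subset (isClosed_Icc.inter (isClosed_le continuous_const (hfc j)))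
      inter_subset_left
  set A : Fin 3 → ℝ := fun j => sSup (SA j) with hA
  set B : Fin 3 → ℝ := fun j => sInf (SB j) with hB
  have hAmem : ∀ j, A j ∈ SA j := fun j =>
    (hSAc j).sSup_mem ⟨0, ⟨le_rfl, zero_le_one⟩, by rw [mem_setOf_eq, hf0]; exact ha.le⟩
  have hBmem : ∀ j, B j ∈ SB j := fun j =>
    (hSBc j).sInf_mem ⟨1, ⟨zero_le_one, le_rfl⟩, by rw [mem_setOf_eq, hf1]; exact hb.le⟩
  have hA_lt : ∀ (j : Fin 3) (x : ℝ), x ∈ Icc (0:ℝ) 1 → a < f j x → A j < x := by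
    intro j x hx hax
    by_contra h
    have hxA : x ≤ A j := le_of_not_gt h
    have : f j x ≤ f j (A j) := hfm j hxA
    have : f j x ≤ a := this.trans (hAmem j).2
    linarith
  have hB_gt : ∀ (j : Fin 3) (x : ℝ), x ∈ Icc (0:ℝ) 1 → f j x < b → x < B j := by
    intro j x hx hxb
    by_contra h
    have hBx : B j ≤ x := le_of_not_gt h
    have : f j (B j) ≤ f j x := hfm j hBx
    have : b ≤ f j x := (hBmem j).2.trans this
    linarith
  have key : ∀ j i : Fin 3, A j < B i := by
    intro j i
    rcases eq_or_ne j i with rfl | hne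
    · -- through intermediate value
      have hmid : (a+b)/2 ∈ Icc (f j 0) (f j 1) := by
        rw [hf0, hf1]
        constructor <;> [linarith; linarith]
      obtain ⟨x, hx, hfx⟩ := intermediate_value_Icc zero_le_one (hfc j).continuousOn hmid
      have h1 : A j < x := hA_lt j x hx (by rw [hfx]; linarith)
      have h2 : x < B j := hB_gt j x hx (by rw [hfx]; linarith)
      linarith
    · have h1 : A j < ↑(u i) := hA_lt j _ (u i).2 (by rw [hfu]; exact hu i j hne)
      have h2 : (↑(u i):ℝ) < B i := hB_gt i _ (u i).2 (by rw [hfu]; exact hub i)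
      linarith
  set α := max (max (A 0) (A 1)) (A 2) with hal
  set β := min (min (B 0) (B 1)) (B 2) with hbe
  have hαβ : α < β := by
    refine max_lt (max_lt ?_ ?_) ?_ <;>
      exact lt_min (lt_min (key _ 0) (key _ 1)) (key _ 2)
  have hAα : ∀ j, A j ≤ α := by
    intro j
    fin_cases j
    · exact le_max_of_le_left (le_max_left _ _)
    · exact le_max_of_le_left (le_max_right _ _)
    · exact le_max_right _ _
  have hβB : ∀ j, β ≤ B j := by
    intro j
    fin_cases j
    · exact min_le_of_left_le (min_le_left _ _)
    · exact min_le_of_left_le (min_le_right _ _)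
    · exact min_le_right _ _
  set x := (α + β)/2 with hx
  have hα0 : 0 ≤ α := le_trans (hAmem 0).1.1 (hAα 0)
  have hβ1 : β ≤ 1 := le_trans (hβB 0) (hBmem 0).1.2
  have hxI : x ∈ Icc (0:ℝ) 1 := ⟨by rw [hx]; linarith, by rw [hx]; linarith⟩
  have hband : ∀ j, a < f j x ∧ f j x < b := by
    intro j
    constructor
    · by_contra h
      have : x ∈ SA j := ⟨hxI, le_of_not_gt h⟩
      have : x ≤ A j := le_csSup (hSAc j).bddAbove this
      have : x ≤ α := this.trans (hAα j)
      rw [hx] at this; linarith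
    · by_contra h
      have : x ∈ SB j := ⟨hxI, le_of_not_gt h⟩
      have : B j ≤ x := csInf_le (hSBc j).bddBelow this
      have : β ≤ x := (hβB j).trans this
      rw [hx] at this; linarith
  have hzX := hp.1.2.1 (pre x)
  rw [mem_X_iff hX] at hzX
  exact hzX.2 fun j => hband j
end main


theorem stmt11 (a b : ℝ) (ha : 0 < a) (hab : a < b) (hb : b < 1)
    (X : Set (Fin 3 → ℝ))
    (hX : X = cube 3 \ {z | ∀ j, z j ∈ Ioo a b}) :
    (∃ p, IsTotalDiPath 3 X p) ∧
      ∀ p q, IsTotalDiPath 3 X p → IsTotalDiPath 3 X q → Dihomotopic 3 X p q := by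
  refine ⟨⟨hpath 0, hpath_total a b ha hb X hX 0⟩, ?_⟩
  intro p q hp hq
  obtain ⟨i, hi⟩ := cover ha hab hb hX p hp
  obtain ⟨i', hi'⟩ := cover ha hab hb hX q hq
  have h1 : Dihomotopic 3 X p (hpath i) := toCanonical ha hab hb hX p hp i hi
  have h2 : Dihomotopic 3 X q (hpath i') := toCanonical ha hab hb hX q hq i' hi'
  obtain ⟨k, hk1, hk2⟩ : ∃ k : Fin 3, k ≠ i ∧ k ≠ i' :=
    (by decide : ∀ i i' : Fin 3, ∃ k : Fin 3, k ≠ i ∧ k ≠ i') i i'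
  have b1 : ElemDihomotopic 3 X (hpath i) (cpath k) := bridge ha hab hb hX i k (Ne.symm hk1)
  have b2 : ElemDihomotopic 3 X (hpath i') (cpath k) := bridge ha hab hb hX i' k (Ne.symm hk2)
  exact Relation.EqvGen.trans _ _ _ h1 (Relation.EqvGen.trans _ _ _ (Relation.EqvGen.rel _ _ b1)
    (Relation.EqvGen.trans _ _ _ (Relation.EqvGen.symm _ _ (Relation.EqvGen.rel _ _ b2))
      (Relation.EqvGen.symm _ _ h2)))
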